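/- (Cluster selection in the plane.) There exists an absolute constant C > 0 such that for every real ε with 0 < ε ≤ 1/2, every closed ball B₀ = closedBall(c₀, r₀) in the Euclidean plane ℝ² with r₀ > 0, and every finite family of closed balls closedBall(c i, r i) (indexed by a finite type L, with r i > 0) each of which intersects B₀ (i.e., closedBall(c i, r i) ∩ B₀ ≠ ∅), there exists a subfamily L' of the family L together with B₀ (i.e., a subset of the balls indexed by L, to which B₀ may be added) of size |L'| ≤ C · ε^{-6} such that for every ball B among the balls of L together with B₀, there exists a ball closedBall(c', r') ∈ L' whose radius r' is at least the radius of B and such that B ⊆ closedBall(c', (1+ε)·r'). -/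

import Mathlib

open Metric Finset
set_option maxHeartbeats 2000000

private lemma coord_abs_le_dist (x y : EuclideanSpace ℝ (Fin 2)) (k : Fin 2) :
    |x k - y k| ≤ dist x y := by
  rw [EuclideanSpace.dist_eq, ← Real.sqrt_sq_eq_abs]
  refine Real.sqrt_le_sqrt ?_
  have h := Finset.single_le_sum (f := fun i => dist (x i) (y i) ^ 2)
    (fun i _ => sq_nonneg _) (Finset.mem_univ k)
  simpa [Real.dist_eq, sq_abs] using h

private lemma dist_le_coords (x y : EuclideanSpace ℝ (Fin 2)) :
    dist x y ≤ |x 0 - y 0| + |x 1 - y 1| := by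
  rw [EuclideanSpace.dist_eq, Fin.sum_univ_two]
  have h0 : dist (x 0) (y 0) ^ 2 = (x 0 - y 0) ^ 2 := by rw [Real.dist_eq, sq_abs]
  have h1 : dist (x 1) (y 1) ^ 2 = (x 1 - y 1) ^ 2 := by rw [Real.dist_eq, sq_abs]
  rw [h0, h1]
  have : (x 0 - y 0) ^ 2 + (x 1 - y 1) ^ 2 ≤ (|x 0 - y 0| + |x 1 - y 1|) ^ 2 := by
    nlinarith [abs_nonneg (x 0 - y 0), abs_nonneg (x 1 - y 1), sq_abs (x 0 - y 0),
      sq_abs (x 1 - y 1), mul_nonneg (abs_nonneg (x 0 - y 0)) (abs_nonneg (x 1 - y 1))]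
  calc Real.sqrt ((x 0 - y 0) ^ 2 + (x 1 - y 1) ^ 2)
      ≤ Real.sqrt ((|x 0 - y 0| + |x 1 - y 1|) ^ 2) := Real.sqrt_le_sqrt this
    _ = |x 0 - y 0| + |x 1 - y 1| := Real.sqrt_sq (by positivity)

/-- Cluster selection in the plane: there is an absolute constant `C > 0` such
that for every `0 < ε ≤ 1/2`, every closed ball `B₀ = closedBall(c₀, r₀)` in the Euclidean
plane and every finite family of closed balls intersecting `B₀`, there is a subfamily of
the family together with `B₀` (indexed by `Option L`, where `none` stands for `B₀`) of size
at most `C · ε⁻⁶`, such that every ball of the family together with `B₀` is contained in a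
`(1+ε)`-expansion of some ball of the subfamily of at least its radius. -/
theorem plane_cluster_selection :
    ∃ C : ℝ, 0 < C ∧
      ∀ (ε : ℝ), 0 < ε → ε ≤ 1/2 →
      ∀ (c₀ : EuclideanSpace ℝ (Fin 2)) (r₀ : ℝ), 0 < r₀ →
      ∀ (L : Type) [Fintype L],
      ∀ (c : L → EuclideanSpace ℝ (Fin 2)) (r : L → ℝ),
      (∀ i, 0 < r i) →
      (∀ i, (Metric.closedBall (c i) (r i) ∩ Metric.closedBall c₀ r₀).Nonempty) →
      -- centers and radii of the family together with `B₀`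
      ∀ (C' : Option L → EuclideanSpace ℝ (Fin 2)) (R : Option L → ℝ),
      C' none = c₀ → R none = r₀ → (∀ i : L, C' (some i) = c i) → (∀ i : L, R (some i) = r i) →
      ∃ L' : Finset (Option L),
        (L'.card : ℝ) ≤ C * ε ^ (-6 : ℤ) ∧
        ∀ o : Option L, ∃ m ∈ L', R o ≤ R m ∧
          Metric.closedBall (C' o) (R o) ⊆ Metric.closedBall (C' m) ((1 + ε) * R m) := by
  refine ⟨7000, by norm_num, ?_⟩
  intro ε hε hε2 c₀ r₀ hr₀ L _ c r hr hint C' R hC0 hR0 hCs hRs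
  classical
  have hRpos : ∀ o, 0 < R o := by
    rintro (_ | i)
    · rw [hR0]; exact hr₀
    · rw [hRs]; exact hr i
  have hdist : ∀ o, dist (C' o) c₀ ≤ R o + r₀ := by
    rintro (_ | i)
    · rw [hC0, hR0, dist_self]; positivity
    · obtain ⟨x, hx1, hx2⟩ := hint i
      rw [Metric.mem_closedBall] at hx1 hx2
      calc dist (C' (some i)) c₀ ≤ dist (C' (some i)) x + dist x c₀ := dist_triangle _ _ _
        _ ≤ R (some i) + r₀ := by
            rw [hCs, hRs, dist_comm]; exact add_le_add hx1 hx2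
  obtain ⟨ms, -, hms⟩ := Finset.exists_max_image (univ : Finset (Option L)) R ⟨none, mem_univ none⟩
  have hms' : ∀ o, R o ≤ R ms := fun o => hms o (mem_univ o)
  have hRsr₀ : r₀ ≤ R ms := hR0 ▸ hms' none
  have hRspos : 0 < R ms := hRpos ms
  set T : ℝ := max (ε * r₀ / 2) (ε * R ms / 2 - r₀) with hTdef
  have hT1 : ε * r₀ / 2 ≤ T := le_max_left _ _
  have hT2 : ε * R ms / 2 - r₀ ≤ T := le_max_right _ _
  have hTpos : 0 < T := lt_of_lt_of_le (by positivity) hT1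
  have hT8 : ε ^ 2 * R ms ≤ 8 * T := by
    rcases le_total r₀ (ε * R ms / 4) with h | h
    · nlinarith
    · nlinarith
  set n : ℕ := ⌈8 / ε ^ 2⌉₊ with hndef
  set M : ℕ := ⌈12 / ε ^ 2⌉₊ with hMdef
  set j : Option L → ℕ := fun o => (Int.log 2 (R o / T)).toNat with hjdef
  set δ : Option L → ℝ := fun o => ε * T * 2 ^ (j o) / 4 with hδdef
  have hδpos : ∀ o, 0 < δ o := fun o => by positivity
  set key : Option L → ℕ × ℤ × ℤ := fun o =>
    (j o, ⌊(C' o 0 - c₀ 0) / δ o⌋, ⌊(C' o 1 - c₀ 1) / δ o⌋) with hkeydef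
  set S : Finset (Option L) := univ.filter (fun o => T < R o) with hSdef
  -- basic scale facts for elements of S
  have hscale : ∀ o ∈ S, T * 2 ^ (j o) ≤ R o ∧ R o < T * 2 ^ (j o) * 2 := by
    intro o hoS
    rw [hSdef, mem_filter] at hoS
    have hTRo : T < R o := hoS.2
    have h1 : (1 : ℝ) ≤ R o / T := (one_le_div hTpos).2 hTRo.le
    have hlognn : 0 ≤ Int.log 2 (R o / T) := by
      have h2 := Int.log_mono_right (b := 2) (R := ℝ) one_pos h1
      simpa using h2
    have hcast : ((j o : ℤ)) = Int.log 2 (R o / T) := by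
      rw [hjdef]; exact Int.toNat_of_nonneg hlognn
    have hzpow : ((2 : ℕ) : ℝ) ^ (Int.log 2 (R o / T)) = (2 : ℝ) ^ (j o) := by
      rw [← hcast, zpow_natCast]; norm_num
    constructor
    · have h3 := Int.zpow_log_le_self (b := 2) (R := ℝ) one_lt_two
        (by positivity : (0:ℝ) < R o / T)
      rw [hzpow] at h3
      have h4 := mul_le_mul_of_nonneg_left h3 hTpos.le
      rw [mul_div_cancel₀ _ (ne_of_gt hTpos)] at h4
      exact h4
    · have h3 := Int.lt_zpow_succ_log_self (b := 2) (R := ℝ) one_lt_two (R o / T)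
      rw [zpow_add_one₀ (by norm_num : ((2:ℕ):ℝ) ≠ 0), hzpow] at h3
      have h4 := mul_lt_mul_of_pos_left h3 hTpos
      rw [mul_div_cancel₀ _ (ne_of_gt hTpos)] at h4
      norm_num at h4
      linarith [h4]
  -- choose representatives
  have hg : ∀ v : ℕ × ℤ × ℤ, ∃ m : Option L, ((S.filter (fun o => key o = v)).Nonempty →
      m ∈ S ∧ key m = v ∧ ∀ o ∈ S, key o = v → R o ≤ R m) := by
    intro v
    rcases (S.filter (fun o => key o = v)).eq_empty_or_nonempty with h | h
    · exact ⟨none, fun hn => absurd (h ▸ hn) (Finset.not_nonempty_empty)⟩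
    · obtain ⟨m, hm, hmax⟩ := Finset.exists_max_image _ R h
      rw [mem_filter] at hm
      exact ⟨m, fun _ => ⟨hm.1, hm.2, fun o ho hk => hmax o (mem_filter.2 ⟨ho, hk⟩)⟩⟩
  choose g hgspec using hg
  refine ⟨insert none (insert ms (S.image (fun o => g (key o)))), ?_, ?_⟩
  · -- cardinality bound
    have hkey_mem : ∀ o ∈ S, key o ∈
        (range n) ×ˢ (Icc (-(M:ℤ)) (M:ℤ)) ×ˢ (Icc (-(M:ℤ)) (M:ℤ)) := by
      intro o hoS
      obtain ⟨hto, hto2⟩ := hscale o hoS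
      have h2pow1 : (1:ℝ) ≤ 2 ^ (j o) := by
        have := pow_le_pow_right₀ (by norm_num : (1:ℝ) ≤ 2) (Nat.zero_le (j o))
        simpa using this
      have h2powpos : (0:ℝ) < 2 ^ (j o) := by positivity
      -- scale bound : j o < n
      have hjn : j o < n := by
        have h1 : (2:ℝ) ^ (j o) * ε ^ 2 ≤ 8 := by
          have h0 : ε ^ 2 * (T * 2 ^ (j o)) ≤ ε ^ 2 * R ms := by
            have := le_trans hto (hms' o); nlinarith
          nlinarith
        have h2 : (8:ℝ) / ε ^ 2 ≤ (n:ℝ) := Nat.le_ceil _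
        have h3 : (n:ℝ) < 2 ^ n := by exact_mod_cast (Nat.lt_two_pow_self (n := n))
        have hε2pos : (0:ℝ) < ε ^ 2 := by positivity
        rw [div_le_iff₀ hε2pos] at h2
        have h4 : (2:ℝ) ^ (j o) < 2 ^ n := by nlinarith
        by_contra hcon
        push_neg at hcon
        have := pow_le_pow_right₀ (by norm_num : (1:ℝ) ≤ 2) hcon
        linarith
      -- coordinate bounds
      have hcoordIcc : ∀ k : Fin 2, ⌊(C' o k - c₀ k) / δ o⌋ ∈ Icc (-(M:ℤ)) (M:ℤ) := by
        intro k
        have hnum : |C' o k - c₀ k| ≤ R o + r₀ :=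
          le_trans (coord_abs_le_dist _ _ k) (hdist o)
        have hTt : T ≤ T * 2 ^ (j o) := by nlinarith
        have hδval : δ o = ε * T * 2 ^ (j o) / 4 := by rw [hδdef]
        have hεnum : ε * |C' o k - c₀ k| ≤ 3 * (T * 2 ^ (j o)) := by
          have h5 : ε * r₀ ≤ 2 * T := by linarith
          have h6 : ε * R o ≤ T * 2 ^ (j o) := by nlinarith
          have h7 : ε * |C' o k - c₀ k| ≤ ε * (R o + r₀) :=
            mul_le_mul_of_nonneg_left hnum hε.le
          nlinarith
        have hε2pos : (0:ℝ) < ε ^ 2 := by positivity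
        have hu : |(C' o k - c₀ k) / δ o| ≤ (M:ℝ) := by
          have hM12 : 12 / ε ^ 2 ≤ (M:ℝ) := Nat.le_ceil _
          have hu12 : |(C' o k - c₀ k) / δ o| ≤ 12 / ε ^ 2 := by
            rw [abs_div, abs_of_pos (hδpos o), div_le_div_iff₀ (hδpos o) hε2pos, hδval]
            nlinarith
          linarith
        rw [abs_le] at hu
        rw [mem_Icc]
        constructor
        · rw [Int.le_floor]; push_cast; exact hu.1
        · have := (Int.floor_le ((C' o k - c₀ k) / δ o)).trans hu.2
          have h' : ((⌊(C' o k - c₀ k) / δ o⌋ : ℤ) : ℝ) ≤ ((M:ℤ):ℝ) := by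
            rw [Int.cast_natCast]; exact this
          exact Int.cast_le.mp h'
      simp only [Finset.mem_product, mem_range]
      exact ⟨hjn, hcoordIcc 0, hcoordIcc 1⟩
    -- counting
    have h1 : (S.image (fun o => g (key o))).card ≤ (S.image key).card := by
      rw [show (fun o => g (key o)) = g ∘ key from rfl, ← Finset.image_image]
      exact Finset.card_image_le
    have h2 : (S.image key).card ≤
        ((range n) ×ˢ (Icc (-(M:ℤ)) (M:ℤ)) ×ˢ (Icc (-(M:ℤ)) (M:ℤ))).card := by
      apply Finset.card_le_card
      intro v hv
      obtain ⟨o, hoS, rfl⟩ := mem_image.1 hv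
      exact hkey_mem o hoS
    have h3 : ((range n) ×ˢ (Icc (-(M:ℤ)) (M:ℤ)) ×ˢ (Icc (-(M:ℤ)) (M:ℤ))).card
        = n * ((2 * M + 1) * (2 * M + 1)) := by
      rw [Finset.card_product, Finset.card_product, card_range, Int.card_Icc]
      congr 1
      have : ((M:ℤ) + 1 - -(M:ℤ)).toNat = 2 * M + 1 := by omega
      rw [this]
    have hcardN : (insert none (insert ms (S.image fun o => g (key o)))).card
        ≤ 2 + n * ((2 * M + 1) * (2 * M + 1)) := by
      have i1 := Finset.card_insert_le none (insert ms (S.image fun o => g (key o)))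
      have i2 := Finset.card_insert_le ms (S.image fun o => g (key o))
      omega
    have hcastc : ((insert none (insert ms (S.image fun o => g (key o)))).card : ℝ)
        ≤ 2 + (n:ℝ) * ((2 * (M:ℝ) + 1) * (2 * (M:ℝ) + 1)) := by
      exact_mod_cast hcardN
    have hz : ε ^ (-6 : ℤ) = (ε ^ 6)⁻¹ := by
      rw [zpow_neg, show ((6:ℤ)) = ((6:ℕ):ℤ) from rfl, zpow_natCast]
    rw [hz, ← div_eq_mul_inv, le_div_iff₀ (by positivity : (0:ℝ) < ε ^ 6)]
    have hε2pos : (0:ℝ) < ε ^ 2 := by positivity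
    have hε21 : ε ^ 2 ≤ 1 / 4 := by nlinarith
    have hn' : (n:ℝ) * ε ^ 2 ≤ 9 := by
      have := Nat.ceil_lt_add_one (by positivity : (0:ℝ) ≤ 8 / ε ^ 2)
      have h4 : (n:ℝ) < 8 / ε ^ 2 + 1 := this
      rw [div_add' _ _ _ (ne_of_gt hε2pos)] at h4
      rw [show (9:ℝ) = 8 + 1/4 + 3/4 by norm_num]
      have := (mul_lt_mul_of_pos_right h4 hε2pos)
      rw [div_mul_cancel₀ _ (ne_of_gt hε2pos)] at this
      nlinarith
    have hM' : (2 * (M:ℝ) + 1) * ε ^ 2 ≤ 27 := by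
      have h4 : (M:ℝ) < 12 / ε ^ 2 + 1 := Nat.ceil_lt_add_one (by positivity)
      have h5 : (M:ℝ) * ε ^ 2 < 12 + ε ^ 2 := by
        have := mul_lt_mul_of_pos_right h4 hε2pos
        rw [add_mul, div_mul_cancel₀ _ (ne_of_gt hε2pos), one_mul] at this
        exact this
      nlinarith [Nat.cast_nonneg (α := ℝ) M]
    have hε61 : ε ^ 6 ≤ 1 := pow_le_one₀ hε.le (by linarith)
    have hnn : (0:ℝ) ≤ (n:ℝ) * ε ^ 2 := by positivity
    have hMn : (0:ℝ) ≤ (2 * (M:ℝ) + 1) * ε ^ 2 := by positivity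
    have hBB : ((2 * (M:ℝ) + 1) * ε ^ 2) * ((2 * (M:ℝ) + 1) * ε ^ 2) ≤ 27 * 27 :=
      mul_le_mul hM' hM' hMn (by norm_num)
    have hABB : ((n:ℝ) * ε ^ 2) * (((2 * (M:ℝ) + 1) * ε ^ 2) * ((2 * (M:ℝ) + 1) * ε ^ 2))
        ≤ 9 * (27 * 27) := by
      apply mul_le_mul hn' hBB (by positivity) (by norm_num)
    calc ((insert none (insert ms (S.image fun o => g (key o)))).card : ℝ) * ε ^ 6
        ≤ (2 + (n:ℝ) * ((2 * (M:ℝ) + 1) * (2 * (M:ℝ) + 1))) * ε ^ 6 := by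
          apply mul_le_mul_of_nonneg_right hcastc (by positivity)
      _ = 2 * ε ^ 6 + ((n:ℝ) * ε ^ 2) * (((2 * (M:ℝ) + 1) * ε ^ 2) * ((2 * (M:ℝ) + 1) * ε ^ 2)) := by
          ring
      _ ≤ 2 * 1 + 9 * (27 * 27) := by
          refine add_le_add ?_ hABB
          nlinarith
      _ ≤ 7000 := by norm_num
  · -- coverage
    intro o
    by_cases hc1 : R o ≤ ε * r₀ / 2
    · refine ⟨none, mem_insert_self _ _, ?_, ?_⟩
      · rw [hR0]; nlinarith
      · intro x hx
        rw [Metric.mem_closedBall] at *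
        rw [hC0, hR0]
        calc dist x c₀ ≤ dist x (C' o) + dist (C' o) c₀ := dist_triangle _ _ _
          _ ≤ R o + (R o + r₀) := add_le_add hx (hdist o)
          _ ≤ (1 + ε) * r₀ := by nlinarith
    · by_cases hc2 : R o ≤ ε * R ms / 2 - r₀
      · refine ⟨ms, mem_insert_of_mem (mem_insert_self _ _), hms' o, ?_⟩
        intro x hx
        rw [Metric.mem_closedBall] at *
        calc dist x (C' ms) ≤ dist x (C' o) + dist (C' o) c₀ + dist c₀ (C' ms) :=
              dist_triangle4 _ _ _ _
          _ ≤ R o + (R o + r₀) + (R ms + r₀) := by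
              refine add_le_add (add_le_add hx (hdist o)) ?_
              rw [dist_comm]; exact hdist ms
          _ ≤ (1 + ε) * R ms := by nlinarith
      · -- o ∈ S
        push_neg at hc1 hc2
        have hoS : o ∈ S := by
          rw [hSdef, mem_filter]
          exact ⟨mem_univ o, max_lt hc1 (by linarith)⟩
        have hfib : (S.filter (fun o' => key o' = key o)).Nonempty :=
          ⟨o, mem_filter.2 ⟨hoS, rfl⟩⟩
        obtain ⟨hmS, hmkey, hmmax⟩ := hgspec (key o) hfib
        set m := g (key o) with hmdef
        refine ⟨m, mem_insert_of_mem (mem_insert_of_mem (mem_image_of_mem _ hoS)),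
          hmmax o hoS rfl, ?_⟩
        -- same scale and cell
        have hkj : j m = j o := congrArg Prod.fst hmkey
        have hδeq : δ m = δ o := by rw [hδdef]; simp only [hkj]
        have hfl0 : ⌊(C' m 0 - c₀ 0) / δ m⌋ = ⌊(C' o 0 - c₀ 0) / δ o⌋ :=
          congrArg (fun p => p.2.1) hmkey
        have hfl1 : ⌊(C' m 1 - c₀ 1) / δ m⌋ = ⌊(C' o 1 - c₀ 1) / δ o⌋ :=
          congrArg (fun p => p.2.2) hmkey
        rw [hδeq] at hfl0 hfl1
        have hcoord : ∀ k : Fin 2, ⌊(C' m k - c₀ k) / δ o⌋ = ⌊(C' o k - c₀ k) / δ o⌋ →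
            |C' m k - C' o k| < δ o := by
          intro k hf
          have habs := Int.abs_sub_lt_one_of_floor_eq_floor hf
          have heq : (C' m k - c₀ k) / δ o - (C' o k - c₀ k) / δ o = (C' m k - C' o k) / δ o := by
            ring
          rw [heq, abs_div, abs_of_pos (hδpos o), div_lt_one (hδpos o)] at habs
          exact habs
        have hdmo : dist (C' m) (C' o) < 2 * δ o :=
          lt_of_le_of_lt (dist_le_coords _ _) (by
            have h0 := hcoord 0 hfl0; have h1 := hcoord 1 hfl1; linarith)
        obtain ⟨hto, hto2⟩ := hscale o hoS
        have htRm : T * 2 ^ (j o) ≤ R m := le_trans hto (hmmax o hoS rfl)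
        intro x hx
        rw [Metric.mem_closedBall] at *
        have hδval : δ o = ε * T * 2 ^ (j o) / 4 := by rw [hδdef]
        calc dist x (C' m) ≤ dist x (C' o) + dist (C' o) (C' m) := dist_triangle _ _ _
          _ ≤ R o + 2 * δ o := by rw [dist_comm (C' o)]; linarith
          _ ≤ (1 + ε) * R m := by
              rw [hδval]
              have hRoRm := hmmax o hoS rfl
              nlinarith [pow_pos (by norm_num : (0:ℝ) < 2) (j o)]
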